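/- Let (W, X) be a hedgehog in a graph G. Then for every pair of distinct vertices u, v ∈ W and every integer ℓ with 2 ≤ ℓ ≤ |X| − 1, there is a path in G of length ℓ from u to v all of whose vertices lie in W. -/

import Mathlib

/-- `(W, X)` is a hedgehog in `G`: `X ⊆ W`, `X` induces a complete subgraph,
and every vertex of `W \ X` is adjacent to every vertex of `X`. -/
def IsHedgehog {V : Type*} (G : SimpleGraph V) (W X : Finset V) : Prop :=
  X ⊆ W ∧ (∀ x ∈ X, ∀ y ∈ X, x ≠ y → G.Adj x y) ∧
    (∀ v ∈ W, v ∉ X → ∀ x ∈ X, G.Adj v x)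

private lemma hedgehog_adj {V : Type*} {G : SimpleGraph V} {W X : Finset V}
    (h : IsHedgehog G W X) {a x : V} (ha : a ∈ W) (hx : x ∈ X) (hne : a ≠ x) :
    G.Adj a x := by
  by_cases haX : a ∈ X
  · exact h.2.1 a haX x hx hne
  · exact h.2.2 a ha haX x hx

private lemma hedgehog_aux {V : Type*} {G : SimpleGraph V} {W X : Finset V}
    (h : IsHedgehog G W X) (v : V) (hv : v ∈ W) :
    ∀ L : List V, L ≠ [] → (∀ x ∈ L, x ∈ X) → L.Nodup → v ∉ L →
    ∀ a, a ∈ W → a ≠ v → a ∉ L →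
    ∃ p : G.Walk a v, p.support = a :: (L ++ [v]) := by
  intro L
  induction L with
  | nil => intro hne; exact absurd rfl hne
  | cons x t ih =>
    intro _ hX hnd hvL a ha hav haL
    have hxX : x ∈ X := hX x (List.mem_cons_self)
    have hxW : x ∈ W := h.1 hxX
    have hax : a ≠ x := fun e => haL (e ▸ List.mem_cons_self)
    have hadj : G.Adj a x := hedgehog_adj h ha hxX hax
    have hxv : x ≠ v := fun e => hvL (e ▸ List.mem_cons_self)
    cases t with
    | nil =>
      have hadj2 : G.Adj x v := (hedgehog_adj h hv hxX hxv.symm).symm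
      exact ⟨SimpleGraph.Walk.cons hadj (SimpleGraph.Walk.cons hadj2 SimpleGraph.Walk.nil),
        by simp⟩
    | cons y s =>
      obtain ⟨p, hp⟩ := ih (by simp)
        (fun z hz => hX z (List.mem_cons_of_mem _ hz))
        (List.Nodup.of_cons hnd)
        (fun hc => hvL (List.mem_cons_of_mem _ hc))
        x hxW hxv ((List.nodup_cons.mp hnd).1)
      exact ⟨SimpleGraph.Walk.cons hadj p, by simp [hp]⟩

theorem stmt3 {V : Type*} (G : SimpleGraph V) (W X : Finset V)
    (h : IsHedgehog G W X)
    (u v : V) (hu : u ∈ W) (hv : v ∈ W) (huv : u ≠ v)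
    (ℓ : ℕ) (hℓ2 : 2 ≤ ℓ) (hℓX : ℓ ≤ X.card - 1) :
    ∃ p : G.Walk u v, p.IsPath ∧ p.length = ℓ ∧ ∀ x ∈ p.support, x ∈ W := by
  classical
  have hcard : ℓ - 1 ≤ (X \ {u, v}).card := by
    have h1 : X.card - ({u, v} : Finset V).card ≤ (X \ {u, v}).card :=
      Finset.le_card_sdiff _ _
    have h2 : ({u, v} : Finset V).card ≤ 2 := Finset.card_insert_le _ _ |>.trans (by simp)
    have h3 : 3 ≤ X.card := by omega
    omega
  obtain ⟨S, hSsub, hScard⟩ := Finset.exists_subset_card_eq hcard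
  set L := S.toList with hL
  have hLlen : L.length = ℓ - 1 := by simp [hL, hScard]
  have hLX : ∀ x ∈ L, x ∈ X := fun x hx =>
    (Finset.mem_sdiff.mp (hSsub (Finset.mem_toList.mp hx))).1
  have hLnotuv : ∀ x ∈ L, x ≠ u ∧ x ≠ v := by
    intro x hx
    have := (Finset.mem_sdiff.mp (hSsub (Finset.mem_toList.mp hx))).2
    simp only [Finset.mem_insert, Finset.mem_singleton] at this
    exact ⟨fun e => this (Or.inl e), fun e => this (Or.inr e)⟩
  have hLne : L ≠ [] := by
    intro e; rw [e] at hLlen; simp at hLlen; omega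
  obtain ⟨p, hp⟩ := hedgehog_aux h v hv L hLne hLX (S.nodup_toList)
    (fun hc => (hLnotuv v hc).2 rfl) u hu huv (fun hc => (hLnotuv u hc).1 rfl)
  refine ⟨p, ?_, ?_, ?_⟩
  · rw [SimpleGraph.Walk.isPath_def, hp]
    rw [List.nodup_cons]
    constructor
    · intro hc
      rcases List.mem_append.mp hc with hc | hc
      · exact (hLnotuv u hc).1 rfl
      · simp at hc; exact huv hc
    · rw [List.nodup_append]
      refine ⟨S.nodup_toList, List.nodup_singleton _, ?_⟩
      intro x hx y hy
      simp only [List.mem_singleton] at hy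
      rw [hy]; exact (hLnotuv x hx).2
  · have := congrArg List.length hp
    rw [SimpleGraph.Walk.length_support] at this
    simp [hLlen] at this
    omega
  · intro x hx
    rw [hp] at hx
    rcases List.mem_cons.mp hx with rfl | hx'
    · exact hu
    · rcases List.mem_append.mp hx' with hc | hc
      · exact h.1 (hLX x hc)
      · simp at hc; subst hc; exact hv
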